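/- With B and ψ the relativised collapsing hierarchy: if α = ψ(γ) where γ ∈ B(γ), then for every ordinal η, α ∈ B(η) if and only if γ ∈ B(η) and γ < η. -/

import Mathlib

open Ordinal

universe u v

set_option linter.deprecated false in
/-- `derivBFamily` as it was defined in Mathlib (Dec 2024), since removed. -/
noncomputable def derivBFamily (o : Ordinal.{u})
    (f : ∀ b < o, Ordinal.{max u v} → Ordinal.{max u v}) :
    Ordinal.{max u v} → Ordinal.{max u v} :=
  derivFamily (familyOfBFamily o f)

/-- The binary Veblen function: `veblen 0 β = ω ^ β`, and for `α > 0`,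
`veblen α` enumerates the common fixed points of `veblen γ` for `γ < α`. -/
noncomputable def veblen : Ordinal → Ordinal → Ordinal :=
  WellFounded.fix Ordinal.lt_wf
    (fun α ih => if α = 0 then fun β => omega0 ^ β
      else derivBFamily.{0,0} α (fun ξ h => ih ξ h))

/-- The set of strongly critical ordinals. -/
def StronglyCritical (γ : Ordinal) : Prop := _root_.veblen γ 0 = γ

/-- `Gamma β` is the `β`-th strongly critical ordinal. -/
noncomputable def Gamma : Ordinal → Ordinal :=
  enumOrd {γ | StronglyCritical γ}

/-- The least uncountable cardinal (as an ordinal) greater than `θ`. -/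
noncomputable def OmegaB (θ : Ordinal) : Ordinal :=
  sInf {o | θ < o ∧ o.card.ord = o ∧ Cardinal.aleph0 < o.card}

/-- Closure of `{0, Ω} ∪ {Γ_β : β ≤ θ}` under `+`, `veblen` and the
given partial collapsing function `f` on arguments below `α`. -/
def closB (θ α : Ordinal) (f : ∀ ξ, ξ < α → Ordinal) : Set Ordinal :=
  ⋂₀ {S : Set Ordinal |
      0 ∈ S ∧ OmegaB θ ∈ S ∧ (∀ β ≤ θ, Gamma β ∈ S) ∧
      (∀ x ∈ S, ∀ y ∈ S, x + y ∈ S) ∧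
      (∀ x ∈ S, ∀ y ∈ S, _root_.veblen x y ∈ S) ∧
      (∀ ξ (h : ξ < α), ξ ∈ S → f ξ h ∈ S)}

/-- The relativised collapsing function `ψ_θ`. -/
noncomputable def psiB (θ : Ordinal) : Ordinal → Ordinal :=
  WellFounded.fix Ordinal.lt_wf
    (fun α ih => sInf {β | β ∉ closB θ α (fun ξ h => ih ξ h)})

/-- The relativised collapsing hierarchy `B_θ(α)`. -/
def BB (θ α : Ordinal) : Set Ordinal :=
  closB θ α (fun ξ _ => psiB θ ξ)

/-- The least strongly critical ordinal strictly above `δ`. -/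
noncomputable def gammaSucc (δ : Ordinal) : Ordinal :=
  sInf {γ | δ < γ ∧ StronglyCritical γ}

theorem psiB_eq (θ γ : Ordinal) : psiB θ γ = sInf {β | β ∉ BB θ γ} := by
  rw [psiB, WellFounded.fix_eq]
  rfl

/- Closure properties of BB -/
theorem BB_zero_mem (θ η : Ordinal) : (0:Ordinal) ∈ BB θ η :=
  fun _ hS => hS.1

theorem BB_omega_mem (θ η : Ordinal) : OmegaB θ ∈ BB θ η :=
  fun _ hS => hS.2.1

theorem BB_gamma_mem (θ η : Ordinal) {β : Ordinal} (h : β ≤ θ) : Gamma β ∈ BB θ η :=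
  fun _ hS => hS.2.2.1 β h

theorem BB_add_mem {θ η x y : Ordinal} (hx : x ∈ BB θ η) (hy : y ∈ BB θ η) :
    x + y ∈ BB θ η :=
  fun S hS => hS.2.2.2.1 x (hx S hS) y (hy S hS)

theorem BB_veblen_mem {θ η x y : Ordinal} (hx : x ∈ BB θ η) (hy : y ∈ BB θ η) :
    _root_.veblen x y ∈ BB θ η :=
  fun S hS => hS.2.2.2.2.1 x (hx S hS) y (hy S hS)

theorem BB_psi_mem {θ η ξ : Ordinal} (h : ξ < η) (hξ : ξ ∈ BB θ η) :
    psiB θ ξ ∈ BB θ η :=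
  fun S hS => hS.2.2.2.2.2 ξ h (hξ S hS)

theorem BB_mono {θ δ δ' : Ordinal} (h : δ ≤ δ') : BB θ δ ⊆ BB θ δ' := by
  intro a ha S hS
  exact ha S ⟨hS.1, hS.2.1, hS.2.2.1, hS.2.2.2.1, hS.2.2.2.2.1,
    fun ξ hξ hm => hS.2.2.2.2.2 ξ (hξ.trans_le h) hm⟩

/-- gap lemma: if BB θ x has no elements in [x, c), then BB θ δ ⊆ BB θ x for δ ∈ [x,c]. -/
theorem BB_gap {θ x c δ : Ordinal} (hgap : ∀ z ∈ BB θ x, ¬(x ≤ z ∧ z < c))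
    (hδc : δ ≤ c) : BB θ δ ⊆ BB θ x := by
  intro a ha
  refine ha (BB θ x) ⟨BB_zero_mem θ x, BB_omega_mem θ x, fun β hβ => BB_gamma_mem θ x hβ,
    fun u hu v hv => BB_add_mem hu hv, fun u hu v hv => BB_veblen_mem hu hv,
    fun ξ hξ hm => ?_⟩
  rcases lt_or_ge ξ x with h | h
  · exact BB_psi_mem h hm
  · exact absurd ⟨h, hξ.trans_le hδc⟩ (hgap ξ hm)

/-- Term algebra witnessing that `BB θ γ` is contained in a small set. -/
inductive Tm (θ γ : Ordinal.{0}) : Type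
  | zero : Tm θ γ
  | omg : Tm θ γ
  | gam (i : (θ + 1).ToType) : Tm θ γ
  | add (a b : Tm θ γ) : Tm θ γ
  | veb (a b : Tm θ γ) : Tm θ γ
  | psi (a : Tm θ γ) : Tm θ γ

noncomputable def Tm.eval {θ γ : Ordinal} : Tm θ γ → Ordinal
  | .zero => 0
  | .omg => OmegaB θ
  | .gam i => Gamma (((ToType.mk (o := θ + 1)).symm i : Set.Iio (θ + 1)) : Ordinal)
  | .add a b => a.eval + b.eval
  | .veb a b => _root_.veblen a.eval b.eval
  | .psi a => if a.eval < γ then psiB θ a.eval else 0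

theorem BB_subset_range (θ γ : Ordinal) : BB θ γ ⊆ Set.range (Tm.eval (θ := θ) (γ := γ)) := by
  intro a ha
  refine ha _ ⟨⟨Tm.zero, rfl⟩, ⟨Tm.omg, rfl⟩, fun β hβ => ?_, ?_, ?_, ?_⟩
  · refine ⟨Tm.gam (ToType.mk (o := θ + 1) ⟨β, lt_of_le_of_lt hβ (lt_add_one θ)⟩), ?_⟩
    simp [Tm.eval]
  · rintro x ⟨a, rfl⟩ y ⟨b, rfl⟩; exact ⟨Tm.add a b, rfl⟩
  · rintro x ⟨a, rfl⟩ y ⟨b, rfl⟩; exact ⟨Tm.veb a b, rfl⟩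
  · rintro ξ h ⟨a, rfl⟩
    exact ⟨Tm.psi a, by simp [Tm.eval, if_pos h]⟩

theorem BB_compl_nonempty (θ γ : Ordinal) : {β | β ∉ BB θ γ}.Nonempty := by
  obtain ⟨b, hb⟩ := Ordinal.bddAbove_range (Tm.eval (θ := θ) (γ := γ))
  refine ⟨b + 1, fun hmem => ?_⟩
  have := hb (BB_subset_range θ γ hmem)
  exact absurd this (not_le.2 (lt_add_one b))

theorem psiB_not_mem (θ γ : Ordinal) : psiB θ γ ∉ BB θ γ := by
  rw [psiB_eq]
  exact csInf_mem (BB_compl_nonempty θ γ)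

theorem mem_BB_of_lt_psiB {θ γ β : Ordinal} (h : β < psiB θ γ) : β ∈ BB θ γ := by
  by_contra hc
  exact absurd ((psiB_eq θ γ) ▸ csInf_le' hc) (not_le.2 h)

theorem veblen_def' (α : Ordinal) :
    _root_.veblen α = if α = 0 then fun β => omega0 ^ β
      else derivBFamily.{0,0} α (fun ξ _ => _root_.veblen ξ) := by
  rw [_root_.veblen, WellFounded.fix_eq]

theorem isNormal_veblen (α : Ordinal) : Order.IsNormal (_root_.veblen α) := by
  induction α using Ordinal.induction with
  | h α ih =>
    rw [veblen_def']
    split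
    · exact isNormal_opow one_lt_omega0
    · exact isNormal_derivFamily _

theorem veblen_fp {ζ α : Ordinal} (h : ζ < α) (β : Ordinal) :
    _root_.veblen ζ (_root_.veblen α β) = _root_.veblen α β := by
  have hne : α ≠ 0 := fun e => (zero_le : 0 ≤ ζ).not_gt (e ▸ h)
  conv_lhs => rw [veblen_def' α, if_neg hne]
  conv_rhs => rw [veblen_def' α, if_neg hne]
  have key : familyOfBFamily α (fun ξ (_ : ξ < α) => _root_.veblen ξ) (ToType.mk ⟨ζ, h⟩)
      = _root_.veblen ζ := familyOfBFamily_enum α _ ζ h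
  have := derivFamily_fp (f := familyOfBFamily α (fun ξ (_ : ξ < α) => _root_.veblen ξ))
    (i := ToType.mk ⟨ζ, h⟩) (by rw [key]; exact _root_.isNormal_veblen ζ) β
  rw [key] at this
  exact this

theorem lt_of_veblen_fixed : ∀ ξ β : Ordinal, _root_.veblen ξ β = β → ξ < β := by
  intro ξ
  induction ξ using Ordinal.induction with
  | h ξ ih =>
    intro β hβ
    rcases eq_or_ne ξ 0 with rfl | hne
    · rw [veblen_def', if_pos rfl] at hβ
      exact hβ ▸ opow_pos β omega0_pos
    · have hfix : ∀ ζ < ξ, _root_.veblen ζ β = β := fun ζ hζ => by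
        conv_lhs => rw [← hβ]
        rw [veblen_fp hζ, hβ]
      have hle : ξ ≤ β := le_of_forall_lt fun ζ hζ => ih ζ hζ β (hfix ζ hζ)
      rcases lt_or_eq_of_le hle with h | h
      · exact h
      · exfalso
        subst h
        have hβ0 : 0 < ξ := pos_iff_ne_zero.2 hne
        have hdβ : _root_.veblen ξ 0 < ξ := by
          conv_rhs => rw [← hβ]
          exact (_root_.isNormal_veblen ξ).strictMono hβ0
        have hdd : _root_.veblen (_root_.veblen ξ 0) (_root_.veblen ξ 0) = _root_.veblen ξ 0 := veblen_fp hdβ 0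
        exact absurd (ih _ hdβ _ hdd) (lt_irrefl _)

theorem right_le_veblen (x y : Ordinal) : y ≤ _root_.veblen x y := (_root_.isNormal_veblen x).strictMono.le_apply

theorem left_le_veblen (x y : Ordinal) : x ≤ _root_.veblen x y := by
  rcases eq_or_ne x 0 with rfl | hne
  · exact zero_le
  · exact le_of_forall_lt fun ζ hζ => lt_of_veblen_fixed ζ _ (veblen_fp hζ y)


theorem stmt18 (θ η α γ : Ordinal) (hγ : γ ∈ BB θ γ) (hα : α = psiB θ γ) :
    α ∈ BB θ η ↔ γ ∈ BB θ η ∧ γ < η := by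
  subst hα
  constructor
  · intro hmem
    by_contra hcon
    have hnot : psiB θ γ ∉ BB θ γ := psiB_not_mem θ γ
    set α := psiB θ γ with hαdef
    have hS : α ∈ BB θ η \ {α} := by
      refine hmem (BB θ η \ {α}) ⟨⟨BB_zero_mem θ η, fun h0 => ?_⟩,
        ⟨BB_omega_mem θ η, fun h0 => ?_⟩,
        fun β hβ => ⟨BB_gamma_mem θ η hβ, fun h0 => ?_⟩, ?_, ?_, ?_⟩
      · exact hnot ((Set.mem_singleton_iff.1 h0) ▸ BB_zero_mem θ γ)
      · exact hnot ((Set.mem_singleton_iff.1 h0) ▸ BB_omega_mem θ γ)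
      · exact hnot ((Set.mem_singleton_iff.1 h0) ▸ BB_gamma_mem θ γ hβ)
      · rintro x ⟨hx, hxne⟩ y ⟨hy, hyne⟩
        refine ⟨BB_add_mem hx hy, fun h0 => ?_⟩
        have he : x + y = α := Set.mem_singleton_iff.1 h0
        have hxα : x < α := lt_of_le_of_ne (he ▸ (le_self_add : x ≤ x + y))
          (fun e => hxne (Set.mem_singleton_iff.2 e))
        have hyα : y < α := lt_of_le_of_ne (he ▸ (le_add_self : y ≤ x + y))
          (fun e => hyne (Set.mem_singleton_iff.2 e))
        exact hnot (he ▸ BB_add_mem (mem_BB_of_lt_psiB hxα) (mem_BB_of_lt_psiB hyα))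
      · rintro x ⟨hx, hxne⟩ y ⟨hy, hyne⟩
        refine ⟨BB_veblen_mem hx hy, fun h0 => ?_⟩
        have he : _root_.veblen x y = α := Set.mem_singleton_iff.1 h0
        have hxα : x < α := lt_of_le_of_ne (he ▸ left_le_veblen x y)
          (fun e => hxne (Set.mem_singleton_iff.2 e))
        have hyα : y < α := lt_of_le_of_ne (he ▸ right_le_veblen x y)
          (fun e => hyne (Set.mem_singleton_iff.2 e))
        exact hnot (he ▸ BB_veblen_mem (mem_BB_of_lt_psiB hxα) (mem_BB_of_lt_psiB hyα))
      · rintro ξ hξη ⟨hξ, hξne⟩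
        refine ⟨BB_psi_mem hξη hξ, fun h0 => ?_⟩
        have he : psiB θ ξ = α := Set.mem_singleton_iff.1 h0
        rcases lt_trichotomy ξ γ with hlt | rfl | hgt
        · rcases lt_or_ge γ η with hγη | hηγ
          · exact hcon ⟨BB_mono hγη.le hγ, hγη⟩
          · by_cases hex : ∃ z, z ∈ BB θ ξ ∧ ξ ≤ z ∧ z < γ
            · set T := {z | z ∈ BB θ ξ ∧ ξ ≤ z ∧ z < γ} with hT
              have hz0 : sInf T ∈ T := csInf_mem hex
              set z0 := sInf T with hz0def
              have hgap : ∀ z ∈ BB θ ξ, ¬(ξ ≤ z ∧ z < z0) := by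
                rintro z hz ⟨h1, h2⟩
                exact absurd (csInf_le' (show z ∈ T from ⟨hz, h1, h2.trans hz0.2.2⟩))
                  (not_le.2 h2)
              have heq2 : BB θ z0 = BB θ ξ :=
                Set.Subset.antisymm (BB_gap hgap le_rfl) (BB_mono hz0.2.1)
              have hψ : psiB θ z0 = psiB θ ξ := by rw [psiB_eq, psiB_eq, heq2]
              have : α ∈ BB θ γ := by
                rw [← he, ← hψ]
                exact BB_psi_mem hz0.2.2 (BB_mono hlt.le hz0.1)
              exact hnot this
            · have hgap : ∀ z ∈ BB θ ξ, ¬(ξ ≤ z ∧ z < γ) := by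
                rintro z hz ⟨h1, h2⟩
                exact hex ⟨z, hz, h1, h2⟩
              have hsub : BB θ η ⊆ BB θ ξ := BB_gap hgap hηγ
              exact hgap ξ (hsub hξ) ⟨le_rfl, hlt⟩
        · exact hcon ⟨hξ, hξη⟩
        · exact hcon ⟨BB_mono (hgt.trans hξη).le hγ, hgt.trans hξη⟩
    exact hS.2 rfl
  · rintro ⟨h1, h2⟩
    exact BB_psi_mem h2 h1
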